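/- Under the stochastic KM decrease inequality with weights Λ_k = Π_{i<k}(1+8λ_i²)^{-1}, summing yields: Σ_{k=0}^{K-1} Λ_{k+1} λ_k(1−λ_k) E[‖T x_k − x_k‖²] ≤ ‖x_0 − p‖² + 2σ*² Σ_{k=0}^{K-1} λ_k², and hence the weighted-average residual bound E[‖T x_{N_K} − x_{N_K}‖²] ≤ (dist(x_0, Fix T)² + 2σ*² Σ_{k<K} λ_k²) / (Λ_K Σ_{k<K} λ_k(1−λ_k)), where N_K is a random index with P(N_K = k) ∝ Λ_{k+1} λ_k (1−λ_k). -/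

import Mathlib

open MeasureTheory Filter Topology
open scoped ENNReal BigOperators

/-- Summing the stochastic KM decrease inequality with weights
`Λ_k = Π_{i<k}(1+8λ_i²)⁻¹` yields the weighted residual bound, and hence
the bound on the expected residual at the random index `N_K`, whose expectation
is exactly the normalized weighted average below. -/
theorem stmt9_weighted_residual_bound
    {H : Type*} [NormedAddCommGroup H] [InnerProductSpace ℝ H] [CompleteSpace H]
    {Ω : Type*} [MeasurableSpace Ω] (μ : Measure Ω) [IsProbabilityMeasure μ]
    (T : H → H) (x : ℕ → Ω → H) (x0 : H) (lam : ℕ → ℝ) (σstar : ℝ)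
    (hFix : ({y : H | T y = y}).Nonempty)
    (hlam : ∀ k, lam k ∈ Set.Ioo (0:ℝ) 1)
    (hx0 : ∀ ω, x 0 ω = x0)
    (hintp : ∀ (k : ℕ) (p : H), Integrable (fun ω => ‖x k ω - p‖ ^ 2) μ)
    (hintr : ∀ k : ℕ, Integrable (fun ω => ‖T (x k ω) - x k ω‖ ^ 2) μ)
    (hdec : ∀ p ∈ {y : H | T y = y}, ∀ k : ℕ,
      (∫ ω, ‖x (k + 1) ω - p‖ ^ 2 ∂μ)
        ≤ (1 + 8 * lam k ^ 2) * (∫ ω, ‖x k ω - p‖ ^ 2 ∂μ)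
          - lam k * (1 - lam k) * (∫ ω, ‖T (x k ω) - x k ω‖ ^ 2 ∂μ)
          + 2 * lam k ^ 2 * σstar ^ 2) :
    (∀ p ∈ {y : H | T y = y}, ∀ K : ℕ,
      (∑ k ∈ Finset.range K,
          (∏ i ∈ Finset.range (k + 1), (1 + 8 * lam i ^ 2)⁻¹) *
            (lam k * (1 - lam k)) * (∫ ω, ‖T (x k ω) - x k ω‖ ^ 2 ∂μ))
        ≤ ‖x0 - p‖ ^ 2 + 2 * σstar ^ 2 * ∑ k ∈ Finset.range K, lam k ^ 2) ∧
    (∀ K : ℕ,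
      (∑ k ∈ Finset.range K,
          (∏ i ∈ Finset.range (k + 1), (1 + 8 * lam i ^ 2)⁻¹) *
            (lam k * (1 - lam k)) * (∫ ω, ‖T (x k ω) - x k ω‖ ^ 2 ∂μ)) /
        (∑ k ∈ Finset.range K,
          (∏ i ∈ Finset.range (k + 1), (1 + 8 * lam i ^ 2)⁻¹) *
            (lam k * (1 - lam k)))
        ≤ (Metric.infDist x0 {y : H | T y = y} ^ 2
            + 2 * σstar ^ 2 * ∑ k ∈ Finset.range K, lam k ^ 2) /
          ((∏ i ∈ Finset.range K, (1 + 8 * lam i ^ 2)⁻¹) *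
            ∑ k ∈ Finset.range K, lam k * (1 - lam k))) := by
  have hΛpos : ∀ k, 0 < ∏ i ∈ Finset.range k, (1 + 8 * lam i ^ 2)⁻¹ := by
    intro k
    apply Finset.prod_pos
    intro i _
    have h := (hlam i).1
    positivity
  have hΛle1 : ∀ k, (∏ i ∈ Finset.range k, (1 + 8 * lam i ^ 2)⁻¹) ≤ 1 := by
    intro k
    apply Finset.prod_le_one
    · intro i _
      have h := (hlam i).1
      positivity
    · intro i _
      have h : (1:ℝ) ≤ 1 + 8 * lam i ^ 2 := by nlinarith [sq_nonneg (lam i)]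
      exact inv_le_one_of_one_le₀ h
  set Λ : ℕ → ℝ := fun k => ∏ i ∈ Finset.range k, (1 + 8 * lam i ^ 2)⁻¹ with hΛ
  set r : ℕ → ℝ := fun k => ∫ ω, ‖T (x k ω) - x k ω‖ ^ 2 ∂μ with hr
  have hrnonneg : ∀ k, 0 ≤ r k := fun k => integral_nonneg (fun ω => by positivity)
  have hΛrec : ∀ k, Λ (k+1) * (1 + 8 * lam k ^ 2) = Λ k := by
    intro k
    have hne : (1 + 8 * lam k ^ 2) ≠ 0 := by nlinarith [sq_nonneg (lam k)]
    simp only [hΛ, Finset.prod_range_succ]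
    field_simp
  have part1 : ∀ p ∈ {y : H | T y = y}, ∀ K : ℕ,
      (∑ k ∈ Finset.range K, Λ (k+1) * (lam k * (1 - lam k)) * r k)
        ≤ ‖x0 - p‖ ^ 2 + 2 * σstar ^ 2 * ∑ k ∈ Finset.range K, lam k ^ 2 := by
    intro p hp K
    set a : ℕ → ℝ := fun k => ∫ ω, ‖x k ω - p‖ ^ 2 ∂μ with ha
    have ha0 : a 0 = ‖x0 - p‖ ^ 2 := by
      have : (fun ω => ‖x 0 ω - p‖ ^ 2) = fun _ : Ω => ‖x0 - p‖ ^ 2 := by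
        funext ω; rw [hx0 ω]
      simp [ha, this]
    have hanonneg : ∀ k, 0 ≤ a k := fun k => integral_nonneg (fun ω => by positivity)
    have hstep : ∀ k, Λ (k+1) * (lam k * (1 - lam k)) * r k ≤
        (Λ k * a k - Λ (k+1) * a (k+1)) + 2 * σstar ^ 2 * lam k ^ 2 := by
      intro k
      have hd : a (k+1) ≤ (1 + 8 * lam k ^ 2) * a k
          - lam k * (1 - lam k) * r k + 2 * lam k ^ 2 * σstar ^ 2 := hdec p hp k
      have h4 : 0 < Λ (k+1) := hΛpos (k+1)
      have h1 := mul_le_mul_of_nonneg_left hd h4.le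
      have h2 := hΛrec k
      have h2a : Λ (k+1) * ((1 + 8 * lam k ^ 2) * a k) = Λ k * a k := by
        rw [← h2]; ring
      have h3 : Λ (k+1) ≤ 1 := hΛle1 (k+1)
      have hint : 0 ≤ (1 - Λ (k+1)) * (lam k ^ 2 * σstar ^ 2) :=
        mul_nonneg (sub_nonneg.mpr h3) (mul_nonneg (sq_nonneg (lam k)) (sq_nonneg σstar))
      nlinarith [h1, h2a, hint]
    calc (∑ k ∈ Finset.range K, Λ (k+1) * (lam k * (1 - lam k)) * r k)
        ≤ ∑ k ∈ Finset.range K, ((Λ k * a k - Λ (k+1) * a (k+1)) + 2 * σstar ^ 2 * lam k ^ 2) :=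
          Finset.sum_le_sum (fun k _ => hstep k)
      _ = (Λ 0 * a 0 - Λ K * a K) + 2 * σstar ^ 2 * ∑ k ∈ Finset.range K, lam k ^ 2 := by
          rw [Finset.sum_add_distrib, Finset.sum_range_sub' (fun k => Λ k * a k), Finset.mul_sum]
      _ ≤ ‖x0 - p‖ ^ 2 + 2 * σstar ^ 2 * ∑ k ∈ Finset.range K, lam k ^ 2 := by
          have h5 : 0 ≤ Λ K * a K := mul_nonneg (hΛpos K).le (hanonneg K)
          have h6 : Λ 0 = 1 := by simp [hΛ]
          rw [h6, ha0]; linarith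
  refine ⟨part1, ?_⟩
  intro K
  rcases Nat.eq_zero_or_pos K with hK | hK
  · subst hK; simp
  · set Ssum := ∑ k ∈ Finset.range K, Λ (k+1) * (lam k * (1 - lam k)) * r k with hS
    set W := ∑ k ∈ Finset.range K, Λ (k+1) * (lam k * (1 - lam k)) with hW
    set C := 2 * σstar ^ 2 * ∑ k ∈ Finset.range K, lam k ^ 2 with hC
    set d := Metric.infDist x0 {y : H | T y = y} with hd
    have hdnn : 0 ≤ d := Metric.infDist_nonneg
    -- antitone Λ
    have hΛanti : ∀ m n, m ≤ n → Λ n ≤ Λ m := by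
      intro m n hmn
      have : Antitone Λ := antitone_nat_of_succ_le (by
        intro k
        have h3 : Λ (k+1) ≤ 1 := hΛle1 (k+1)
        have hne : (1:ℝ) ≤ 1 + 8 * lam k ^ 2 := by nlinarith [sq_nonneg (lam k)]
        calc Λ (k+1) = Λ (k+1) * 1 := by ring
          _ ≤ Λ (k+1) * (1 + 8 * lam k ^ 2) := by
              exact mul_le_mul_of_nonneg_left hne (hΛpos (k+1)).le
          _ = Λ k := hΛrec k)
      exact this hmn
    have hWpos' : 0 < ∑ k ∈ Finset.range K, lam k * (1 - lam k) := by
      apply Finset.sum_pos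
      · intro k _
        have h1 := (hlam k).1
        have h2 := (hlam k).2
        nlinarith
      · exact Finset.nonempty_range_iff.mpr hK.ne'
    have hW'pos : 0 < Λ K * ∑ k ∈ Finset.range K, lam k * (1 - lam k) :=
      mul_pos (hΛpos K) hWpos'
    have hW'leW : Λ K * (∑ k ∈ Finset.range K, lam k * (1 - lam k)) ≤ W := by
      rw [hW, Finset.mul_sum]
      apply Finset.sum_le_sum
      intro k hk
      have hkK : k + 1 ≤ K := Finset.mem_range.mp hk
      have h1 := (hlam k).1
      have h2 := (hlam k).2
      have h3 : Λ K ≤ Λ (k+1) := hΛanti _ _ hkK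
      have h4 : 0 ≤ lam k * (1 - lam k) := by nlinarith
      nlinarith
    have hSnn : 0 ≤ Ssum := by
      apply Finset.sum_nonneg
      intro k _
      have h1 := (hlam k).1
      have h2 := (hlam k).2
      exact mul_nonneg (mul_nonneg (hΛpos (k+1)).le (by nlinarith)) (hrnonneg k)
    have hCnn : 0 ≤ C := by
      rw [hC]
      have : 0 ≤ ∑ k ∈ Finset.range K, lam k ^ 2 :=
        Finset.sum_nonneg fun k _ => sq_nonneg _
      have h2 : 0 ≤ 2 * σstar ^ 2 := by positivity
      exact mul_nonneg h2 this
    have hSle : Ssum ≤ d ^ 2 + C := by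
      by_cases hc : Ssum - C ≤ 0
      · nlinarith [sq_nonneg d]
      · push_neg at hc
        have hsq : Real.sqrt (Ssum - C) ≤ d := by
          by_contra hlt
          push_neg at hlt
          obtain ⟨p, hpS, hplt⟩ := (Metric.infDist_lt_iff hFix).mp hlt
          have hb := part1 p hpS K
          have hdn : dist x0 p = ‖x0 - p‖ := dist_eq_norm x0 p
          have h0d : 0 ≤ dist x0 p := dist_nonneg
          have hsq2 : dist x0 p ^ 2 < Ssum - C := by
            have := Real.sq_sqrt hc.le
            nlinarith [Real.sqrt_nonneg (Ssum - C)]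
          rw [hdn] at hsq2
          rw [← hC] at hb
          nlinarith
        have := Real.sq_sqrt hc.le
        nlinarith [hsq, Real.sqrt_nonneg (Ssum - C), hdnn]
    exact div_le_div₀ (by nlinarith [sq_nonneg d]) hSle hW'pos hW'leW
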